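/- For every infinite cardinal κ there exists a uniform ultrafilter p on κ such that p has an ω^op-like local base in the space u(κ) of uniform ultrafilters on κ (so the local Noetherian type of p is ω), while the character of p in u(κ) is 2^κ. -/

import Mathlib

open Cardinal Set

universe u

variable {X : Type u}

/-- `B` is a base for the topology of `X`. -/
def IsBase [TopologicalSpace X] (B : Set (Set X)) : Prop :=
  (∀ U ∈ B, IsOpen U) ∧ ∀ W : Set X, IsOpen W → ∀ p ∈ W, ∃ U ∈ B, p ∈ U ∧ U ⊆ W

/-- `B` is a local base at `p`. -/
def IsLocalBase [TopologicalSpace X] (p : X) (B : Set (Set X)) : Prop :=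
  (∀ U ∈ B, IsOpen U ∧ p ∈ U) ∧ ∀ W : Set X, IsOpen W → p ∈ W → ∃ U ∈ B, U ⊆ W

/-- `B` is a local π-base at `p`. -/
def IsLocalPiBase [TopologicalSpace X] (p : X) (B : Set (Set X)) : Prop :=
  (∀ U ∈ B, IsOpen U ∧ U.Nonempty) ∧ ∀ W : Set X, IsOpen W → p ∈ W → ∃ U ∈ B, U ⊆ W

/-- The weight of `X`: the least infinite cardinal `κ` such that `X` has a base of
cardinality at most `κ`. -/
noncomputable def weight (X : Type u) [TopologicalSpace X] : Cardinal.{u} :=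
  sInf {κ | ℵ₀ ≤ κ ∧ ∃ B : Set (Set X), IsBase B ∧ #B ≤ κ}

/-- The character of `p` in `X`. -/
noncomputable def character [TopologicalSpace X] (p : X) : Cardinal.{u} :=
  sInf {κ | ℵ₀ ≤ κ ∧ ∃ B : Set (Set X), IsLocalBase p B ∧ #B ≤ κ}

/-- The π-character of `p` in `X`. -/
noncomputable def piCharacter [TopologicalSpace X] (p : X) : Cardinal.{u} :=
  sInf {κ | ℵ₀ ≤ κ ∧ ∃ B : Set (Set X), IsLocalPiBase p B ∧ #B ≤ κ}

/-- A family of sets (ordered by `⊆`) is `κ^op`-like if no member is contained in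
`κ`-many members. -/
def IsOpLike {Y : Type u} (B : Set (Set Y)) (κ : Cardinal.{u}) : Prop :=
  ∀ U ∈ B, #{V : Set Y // V ∈ B ∧ U ⊆ V} < κ

/-- The Noetherian type of `X`: the least infinite `κ` such that `X` has a
`κ^op`-like base. -/
noncomputable def Nt (X : Type u) [TopologicalSpace X] : Cardinal.{u} :=
  sInf {κ | ℵ₀ ≤ κ ∧ ∃ B : Set (Set X), IsBase B ∧ IsOpLike B κ}

/-- `⟨F i⟩` is a `⟨#ι, κ⟩`-splitter of `X`: a sequence of finite open covers such
that for every index set `I` of cardinality `κ` and every choice `U i ∈ F i`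
(`i ∈ I`), the interior of `⋂_{i ∈ I} U i` is empty. -/
def IsSplitter [TopologicalSpace X] {ι : Type u} (F : ι → Set (Set X))
    (κ : Cardinal.{u}) : Prop :=
  (∀ i, (F i).Finite ∧ (∀ U ∈ F i, IsOpen U) ∧ ⋃₀ F i = Set.univ) ∧
  ∀ (I : Set ι) (U : ι → Set X), #I = κ → (∀ i ∈ I, U i ∈ F i) →
    interior (⋂ i ∈ I, U i) = ∅

/-- The local Noetherian type of `p`: the least infinite `κ` such that `p` has a
`κ^op`-like local base. -/
noncomputable def locNt [TopologicalSpace X] (p : X) : Cardinal.{u} :=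
  sInf {κ | ℵ₀ ≤ κ ∧ ∃ B : Set (Set X), IsLocalBase p B ∧ IsOpLike B κ}

/-- The space `u(α)` of uniform ultrafilters on `α`: ultrafilters all of whose
members have full cardinality. -/
def UUlt (α : Type u) : Type u :=
  {p : Ultrafilter α // ∀ x : Set α, x ∈ p → #x = #α}

/-- The topology on `u(α)` generated by the sets `x* = {q : x ∈ q}` for `x ⊆ α`. -/
instance (α : Type u) : TopologicalSpace (UUlt α) :=
  TopologicalSpace.generateFrom {S | ∃ x : Set α, S = {q : UUlt α | x ∈ q.1}}

namespace UUltAux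
open Filter Function TopologicalSpace

variable {α : Type u} [Infinite α]

def star (x : Set α) : Set (UUlt α) := {q : UUlt α | x ∈ q.1}

def Small (x : Set α) : Prop := #x < #α

lemma isOpen_star (x : Set α) : IsOpen (star x) :=
  TopologicalSpace.GenerateOpen.basic _ ⟨x, rfl⟩

lemma star_mono {x y : Set α} (h : x ⊆ y) : star x ⊆ star y :=
  fun q hq => Filter.mem_of_superset hq h

lemma exists_star_subset {U : Set (UUlt α)} (hU : IsOpen U) :
    ∀ q ∈ U, ∃ y, y ∈ q.1 ∧ star y ⊆ U := by
  have h : TopologicalSpace.GenerateOpen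
      {S | ∃ x : Set α, S = {q : UUlt α | x ∈ q.1}} U := hU
  clear hU
  induction h with
  | basic S hS =>
      obtain ⟨x, rfl⟩ := hS
      exact fun q hq => ⟨x, hq, fun r hr => hr⟩
  | univ => exact fun q _ => ⟨Set.univ, univ_mem, fun r _ => trivial⟩
  | inter U V hU hV ihU ihV =>
      intro q hq
      obtain ⟨y, hy, hys⟩ := ihU q hq.1
      obtain ⟨z, hz, hzs⟩ := ihV q hq.2
      exact ⟨y ∩ z, inter_mem hy hz,
        fun r hr => ⟨hys (Filter.mem_of_superset hr Set.inter_subset_left),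
          hzs (Filter.mem_of_superset hr Set.inter_subset_right)⟩⟩
  | sUnion S hS ih =>
      intro q hq
      obtain ⟨T, hT, hqT⟩ := hq
      obtain ⟨y, hy, hys⟩ := ih T hT q hqT
      exact ⟨y, hy, hys.trans (Set.subset_sUnion_of_mem hT)⟩

lemma small_union {x y : Set α} (hx : Small x) (hy : Small y) : Small (x ∪ y) :=
  lt_of_le_of_lt (Cardinal.mk_union_le x y) (Cardinal.add_lt_of_lt (Cardinal.aleph0_le_mk α) hx hy)

lemma small_empty : Small (∅ : Set α) := by
  rw [Small, Cardinal.mk_emptyCollection]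
  exact Cardinal.aleph0_pos.trans_le (Cardinal.aleph0_le_mk α)

lemma small_biUnion {β : Type*} {t : Set β} (ht : t.Finite) {g : β → Set α}
    (h : ∀ b ∈ t, Small (g b)) : Small (⋃ b ∈ t, g b) := by
  refine Set.Finite.induction_on
    (motive := fun t _ => (∀ b ∈ t, Small (g b)) → Small (⋃ b ∈ t, g b)) t ht
    (fun _ => by simpa using small_empty) ?_ h
  intro a s _ _ ih h'
  rw [Set.biUnion_insert]
  exact small_union (h' a (Set.mem_insert _ _))
    (ih fun b hb => h' b (Set.mem_insert_of_mem _ hb))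

lemma exists_mem_diff {B C : Set α} (hB : #B = #α) (hC : Small C) : ∃ a, a ∈ B ∧ a ∉ C := by
  by_contra h
  push_neg at h
  have : B ⊆ C := h
  exact absurd (hB ▸ Cardinal.mk_le_mk_of_subset this) (not_le.mpr hC)

lemma uniform_of_ult {p : Ultrafilter α} (h : ∀ s : Set α, Small s → sᶜ ∈ p) :
    ∀ x : Set α, x ∈ p → #x = #α := by
  intro x hx
  refine le_antisymm (Cardinal.mk_set_le x) (not_lt.mp fun hlt => ?_)
  have h2 : xᶜ ∈ p := h x hlt
  have : (∅ : Set α) ∈ p := by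
    have := Filter.inter_mem hx h2
    rwa [Set.inter_compl_self] at this
  exact (Filter.empty_notMem (p : Filter α)) this

lemma exists_uult_mem {y : Set α} (hy : #y = #α) : ∃ q : UUlt α, y ∈ q.1 := by
  set G : Set (Set α) := insert y (compl '' {s | Small s}) with hG
  have hne : (Filter.generate G).NeBot := by
    rw [Filter.generate_neBot_iff]
    intro t hts htf
    set S : Set (Set α) := {s | Small s ∧ sᶜ ∈ t} with hS
    have hSfin : S.Finite := by
      have : S ⊆ compl ⁻¹' t := fun s hs => hs.2
      exact (htf.preimage (compl_injective.injOn)).subset this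
    have hsmall : Small (⋃ s ∈ S, s) := small_biUnion hSfin fun s hs => hs.1
    obtain ⟨a, haB, haC⟩ := exists_mem_diff hy hsmall
    refine ⟨a, fun u hu => ?_⟩
    rcases hts hu with rfl | ⟨s, hs, rfl⟩
    · exact haB
    · intro has
      exact haC (Set.mem_biUnion ⟨hs, by simpa using hu⟩ has)
  obtain ⟨u, hu⟩ := Ultrafilter.exists_le (Filter.generate G)
  have hmem : ∀ x ∈ G, x ∈ u := fun x hx => hu (Filter.mem_generate_of_mem hx)
  have huni := uniform_of_ult (p := u) fun s hs => hmem _ (Set.mem_insert_of_mem _ ⟨s, hs, rfl⟩)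
  exact ⟨⟨u, huni⟩, hmem y (Set.mem_insert _ _)⟩

lemma star_subset_star {y z : Set α} (h : star y ⊆ star z) : Small (y \ z) := by
  by_contra hb
  have h1 : #(y \ z : Set α) = #α := le_antisymm (Cardinal.mk_set_le _) (not_lt.mp hb)
  obtain ⟨q, hq⟩ := exists_uult_mem h1
  have hyq : y ∈ q.1 := Filter.mem_of_superset hq Set.diff_subset
  have hzq : z ∈ q.1 := h hyq
  have : (∅ : Set α) ∈ q.1 := by
    have := Filter.inter_mem hq hzq
    rwa [Set.diff_inter_self] at this
  exact (Filter.empty_notMem (q.1 : Filter α)) this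
lemma mk_index : #(Finset α × Finset (Finset α)) = #α := by
  have h1 : #(Finset α) = #α := Cardinal.mk_finset_of_infinite α
  have h2 : #(Finset (Finset α)) = #α := (Cardinal.mk_finset_of_infinite (Finset α)).trans h1
  rw [Cardinal.mk_prod, Cardinal.lift_id, Cardinal.lift_id, h1, h2,
    Cardinal.mul_eq_self (Cardinal.aleph0_le_mk α)]

lemma exists_indep : ∃ f : Set α → Set α, ∀ s t : Finset (Set α), Disjoint s t →
    #((⋂ w ∈ s, f w) \ (⋃ w ∈ t, f w) : Set α) = #α := by
  classical
  set I := Finset α × Finset (Finset α) with hI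
  set g : Set α → Set I := fun X => {p : I | p.1.filter (fun a => a ∈ X) ∈ p.2} with hg
  have key : ∀ s t : Finset (Set α), Disjoint s t →
      #((⋂ w ∈ s, g w) \ (⋃ w ∈ t, g w) : Set I) = #α := by
    intro s t hst
    refine le_antisymm ((Cardinal.mk_set_le _).trans_eq mk_index) ?_
    -- separating points
    have hpt : ∀ pr : Set α × Set α, ∃ a : α, pr.1 ∈ s → pr.2 ∈ t →
        ¬((a ∈ pr.1) ↔ (a ∈ pr.2)) := by
      rintro ⟨X, Y⟩
      by_cases hX : X ∈ s
      · by_cases hY : Y ∈ t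
        · have hne : X ≠ Y := by
            rintro rfl
            exact (Finset.disjoint_left.mp hst hX) hY
          have : ∃ a, ¬((a ∈ X) ↔ (a ∈ Y)) := by
            by_contra hc
            push_neg at hc
            exact hne (Set.ext hc)
          obtain ⟨a, ha⟩ := this
          exact ⟨a, fun _ _ => ha⟩
        · exact ⟨Classical.arbitrary α, fun _ h => absurd h hY⟩
      · exact ⟨Classical.arbitrary α, fun h _ => absurd h hX⟩
    choose pt hptp using hpt
    set s₀ : Finset α := (s ×ˢ t).image pt with hs₀
    have sep : ∀ u : Finset α, s₀ ⊆ u → ∀ X ∈ s, ∀ Y ∈ t,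
        u.filter (fun a => a ∈ X) ≠ u.filter (fun a => a ∈ Y) := by
      intro u hsu X hX Y hY heq
      have hmem : pt (X, Y) ∈ u := hsu (Finset.mem_image_of_mem pt (Finset.mem_product.mpr ⟨hX, hY⟩))
      have := hptp (X, Y) hX hY
      apply this
      constructor
      · intro haX
        have : pt (X, Y) ∈ u.filter (fun a => a ∈ Y) := heq ▸ (Finset.mem_filter.mpr ⟨hmem, haX⟩)
        exact (Finset.mem_filter.mp this).2
      · intro haY
        have : pt (X, Y) ∈ u.filter (fun a => a ∈ X) := heq.symm ▸ (Finset.mem_filter.mpr ⟨hmem, haY⟩)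
        exact (Finset.mem_filter.mp this).2
    -- the injection
    set φ : {a : α // a ∉ s₀} → I := fun a =>
      (insert a.1 s₀, s.image (fun X => (insert a.1 s₀).filter (fun b => b ∈ X))) with hφ
    have hφmem : ∀ a, φ a ∈ ((⋂ w ∈ s, g w) \ (⋃ w ∈ t, g w) : Set I) := by
      intro a
      constructor
      · simp only [Set.mem_iInter]
        intro X hX
        exact Finset.mem_image_of_mem (fun X => (insert a.1 s₀).filter (fun b => b ∈ X)) hX
      · simp only [Set.mem_iUnion]
        rintro ⟨Y, hY, hmem⟩
        obtain ⟨X, hX, hXY⟩ := Finset.mem_image.mp hmem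
        exact sep _ (Finset.subset_insert _ _) X hX Y hY hXY
    have hφinj : Function.Injective φ := by
      rintro ⟨a, ha⟩ ⟨b, hb⟩ hab
      have h1 : insert a s₀ = insert b s₀ := congrArg Prod.fst hab
      have : a ∈ insert b s₀ := h1 ▸ Finset.mem_insert_self a s₀
      rcases Finset.mem_insert.mp this with h | h
      · exact Subtype.ext h
      · exact absurd h ha
    have hcard : #{a : α // a ∉ s₀} = #α := by
      have := Cardinal.mk_compl_of_infinite (↑s₀ : Set α) (s₀.finite_toSet.lt_aleph0.trans_le (Cardinal.aleph0_le_mk α))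
      exact this
    calc #α = #{a : α // a ∉ s₀} := hcard.symm
      _ ≤ _ := Cardinal.mk_le_of_injective (f := fun a => (⟨φ a, hφmem a⟩ : ((⋂ w ∈ s, g w) \ (⋃ w ∈ t, g w) : Set I)))
          (fun a b hab => hφinj (congrArg Subtype.val hab))
  -- transport along an equivalence I ≃ α
  obtain ⟨e⟩ := Cardinal.eq.mp (mk_index (α := α))
  refine ⟨fun X => e '' g X, fun s t hst => ?_⟩
  have himg : (⋂ w ∈ s, e '' g w) \ (⋃ w ∈ t, e '' g w)
      = e '' ((⋂ w ∈ s, g w) \ (⋃ w ∈ t, g w)) := by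
    rw [Set.image_diff e.injective, Set.image_iInter₂ e.bijective, Set.image_iUnion₂]
  rw [himg, Cardinal.mk_image_eq e.injective]
  exact key s t hst
lemma exists_reps {β γ : Type u} [Nonempty γ] {B : Set β} (hB : B.Finite) {D : β → Set γ}
    (hD : ∀ x ∈ B, (D x).Infinite) {σ : Set γ} (hσ : σ.Finite) :
    ∃ z : β → γ, Set.InjOn z B ∧ ∀ x ∈ B, z x ∈ D x ∧ z x ∉ σ := by
  classical
  refine Set.Finite.induction_on
    (motive := fun B _ => (∀ x ∈ B, (D x).Infinite) →
      ∃ z : β → γ, Set.InjOn z B ∧ ∀ x ∈ B, z x ∈ D x ∧ z x ∉ σ) B hB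
    (fun _ => ⟨fun _ => Classical.arbitrary _, by simp [Set.InjOn], by simp⟩) ?_ hD
  · intro a B' haB' hB'fin ih hD'
    obtain ⟨z', hz'inj, hz'⟩ := ih fun x hx => hD' x (Set.mem_insert_of_mem _ hx)
    have hbig : (D a \ (σ ∪ z' '' B')).Infinite :=
      (hD' a (Set.mem_insert _ _)).diff (hσ.union (hB'fin.image z'))
    obtain ⟨c, hc⟩ := hbig.nonempty
    refine ⟨Function.update z' a c, ?_, ?_⟩
    · intro x hx y hy hxy
      rcases Set.mem_insert_iff.mp hx with rfl | hx' <;>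
        rcases Set.mem_insert_iff.mp hy with rfl | hy'
      · rfl
      · rw [Function.update_self, Function.update_of_ne (by rintro rfl; exact haB' hy')] at hxy
        exact absurd ⟨y, hy', hxy.symm⟩ (fun h => hc.2 (Set.mem_union_right _ h))
      · rw [Function.update_self, Function.update_of_ne (by rintro rfl; exact haB' hx')] at hxy
        exact absurd ⟨x, hx', hxy⟩ (fun h => hc.2 (Set.mem_union_right _ h))
      · rw [Function.update_of_ne (by rintro rfl; exact haB' hx'),
          Function.update_of_ne (by rintro rfl; exact haB' hy')] at hxy
        exact hz'inj hx' hy' hxy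
    · intro x hx
      rcases Set.mem_insert_iff.mp hx with rfl | hx'
      · rw [Function.update_self]
        exact ⟨hc.1, fun h => hc.2 (Set.mem_union_left _ h)⟩
      · rw [Function.update_of_ne (by rintro rfl; exact haB' hx')]
        exact hz' x hx'

lemma exists_good_ult : ∃ (f : Set α → Set α) (p : UUlt α),
    (∀ w, f w ∈ p.1) ∧ ∀ y ∈ p.1, {w : Set α | Small (y \ f w)}.Finite := by
  classical
  obtain ⟨f, hf⟩ := exists_indep (α := α)
  have finj : Function.Injective f := by
    intro w w' h
    by_contra hne
    have hd : Disjoint ({w} : Finset (Set α)) {w'} := by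
      simp only [Finset.disjoint_singleton]; exact hne
    have := hf {w} {w'} hd
    simp only [Finset.mem_singleton, Set.iInter_iInter_eq_left, Set.iUnion_iUnion_eq_left, h,
      Set.diff_self, Cardinal.mk_emptyCollection] at this
    exact (Cardinal.aleph0_pos.trans_le (Cardinal.aleph0_le_mk α)).ne this
  set D : Set α → Set (Set α) := fun y => {w | Small (y \ f w)} with hD
  set Bad : Set (Set α) := {y | (D y).Infinite} with hBad
  set G : Set (Set α) := (Set.range f ∪ compl '' Bad) ∪ compl '' {s | Small s} with hG
  have hgen : (Filter.generate G).NeBot := by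
    rw [Filter.generate_neBot_iff]
    intro t hts htf
    set σ : Set (Set α) := f ⁻¹' t with hσ
    have hσfin : σ.Finite := htf.preimage finj.injOn
    set Bset : Set (Set α) := {x | x ∈ Bad ∧ xᶜ ∈ t} with hBset
    have hBsetfin : Bset.Finite :=
      ((htf.preimage compl_injective.injOn).subset (fun x hx => hx.2))
    set Sset : Set (Set α) := {s | Small s ∧ sᶜ ∈ t} with hSset
    have hSsetfin : Sset.Finite :=
      ((htf.preimage compl_injective.injOn).subset (fun x hx => hx.2))
    obtain ⟨z, hzinj, hz⟩ := exists_reps hBsetfin (fun x hx => hx.1) hσfin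
    set sF : Finset (Set α) := hσfin.toFinset with hsF
    set tF : Finset (Set α) := hBsetfin.toFinset.image z with htF
    have hdisj : Disjoint sF tF := by
      rw [Finset.disjoint_left]
      intro w hwσ hwt
      obtain ⟨x, hx, rfl⟩ := Finset.mem_image.mp hwt
      exact (hz x (hBsetfin.mem_toFinset.mp hx)).2 (hσfin.mem_toFinset.mp hwσ)
    have hbig := hf sF tF hdisj
    set C : Set α := (⋃ x ∈ Bset, (x \ f (z x))) ∪ (⋃ s ∈ Sset, s) with hC
    have hCsmall : Small C :=
      small_union (small_biUnion hBsetfin fun x hx => (hz x hx).1)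
        (small_biUnion hSsetfin fun s hs => hs.1)
    obtain ⟨a, haB, haC⟩ := exists_mem_diff hbig hCsmall
    refine ⟨a, fun u hu => ?_⟩
    rcases hts hu with (⟨w, rfl⟩ | ⟨x, hx, rfl⟩) | ⟨s, hs, rfl⟩
    · -- u = f w
      have hwσ : w ∈ sF := hσfin.mem_toFinset.mpr hu
      exact Set.mem_iInter₂.mp haB.1 w hwσ
    · -- u = xᶜ, x ∈ Bad
      have hxB : x ∈ Bset := ⟨hx, hu⟩
      have hnotfz : a ∉ f (z x) := fun h =>
        haB.2 (Set.mem_iUnion₂.mpr ⟨z x, Finset.mem_image_of_mem z (hBsetfin.mem_toFinset.mpr hxB), h⟩)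
      intro hax
      exact haC (Set.mem_union_left _ (Set.mem_biUnion hxB ⟨hax, hnotfz⟩))
    · -- u = sᶜ, s small
      intro has
      exact haC (Set.mem_union_right _ (Set.mem_biUnion ⟨hs, hu⟩ has))
  obtain ⟨u, hu⟩ := Ultrafilter.exists_le (Filter.generate G)
  have hmem : ∀ x ∈ G, x ∈ u := fun x hx => hu (Filter.mem_generate_of_mem hx)
  have huni := uniform_of_ult (p := u) fun s hs =>
    hmem _ (Set.mem_union_right _ ⟨s, hs, rfl⟩)
  refine ⟨f, ⟨u, huni⟩, fun w => hmem _ (Set.mem_union_left _ (Set.mem_union_left _ ⟨w, rfl⟩)), ?_⟩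
  intro y hy
  by_contra hinf
  have hyBad : y ∈ Bad := hinf
  have hyc : yᶜ ∈ u := hmem _ (Set.mem_union_left _ (Set.mem_union_right _ ⟨y, hyBad, rfl⟩))
  have : (∅ : Set α) ∈ u := by
    have := Filter.inter_mem hy hyc
    rwa [Set.inter_compl_self] at this
  exact (Filter.empty_notMem (u : Filter α)) this
end UUltAux

/-- For every infinite `α` there is a uniform ultrafilter `p` on `α` whose local
Noetherian type in `u(α)` is `ω` (it has an `ω^op`-like local base) while its
character is `2^|α|`. -/
theorem exists_uniformUltrafilter_locNt_aleph0_character_two_pow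
    (α : Type u) [Infinite α] :
    ∃ p : UUlt α, locNt p = ℵ₀ ∧ character p = 2 ^ #α := by
  classical
  open UUltAux in
  obtain ⟨f, p, hfp, hD⟩ := UUltAux.exists_good_ult (α := α)
  refine ⟨p, ?_, ?_⟩
  · -- locNt p = ℵ₀
    haveI hne : Nonempty {y : Set α // y ∈ p.1} := ⟨⟨Set.univ, Filter.univ_mem⟩⟩
    set sf : Set α → Set α := fun w =>
      (Function.invFun (Subtype.val : {y : Set α // y ∈ p.1} → Set α) w).1 with hsf
    have hsf1 : ∀ w, sf w ∈ p.1 := fun w =>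
      (Function.invFun (Subtype.val : {y : Set α // y ∈ p.1} → Set α) w).2
    have hsf2 : ∀ y ∈ p.1, ∃ w, sf w = y := by
      intro y hy
      obtain ⟨w, hw⟩ := Function.invFun_surjective
        (f := (Subtype.val : {y : Set α // y ∈ p.1} → Set α)) Subtype.val_injective ⟨y, hy⟩
      exact ⟨w, by rw [hsf]; simp only [hw]⟩
    set Bloc : Set (Set (UUlt α)) := {V | ∃ w, V = UUltAux.star (sf w ∩ f w)} with hBloc
    have hbase : IsLocalBase p Bloc := by
      constructor
      · rintro U ⟨w, rfl⟩
        exact ⟨UUltAux.isOpen_star _, Filter.inter_mem (hsf1 w) (hfp w)⟩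
      · intro W hW hpW
        obtain ⟨y, hy, hys⟩ := UUltAux.exists_star_subset hW p hpW
        obtain ⟨w, hw⟩ := hsf2 y hy
        refine ⟨UUltAux.star (sf w ∩ f w), ⟨w, rfl⟩, ?_⟩
        refine (UUltAux.star_mono Set.inter_subset_left).trans ?_
        rw [hw]; exact hys
    have hop : IsOpLike Bloc ℵ₀ := by
      rintro U ⟨w, rfl⟩
      have hfin : ((fun w' => UUltAux.star (sf w' ∩ f w')) ''
          {w' : Set α | UUltAux.Small ((sf w ∩ f w) \ f w')}).Finite :=
        (hD _ (Filter.inter_mem (hsf1 w) (hfp w))).image _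
      refine lt_of_le_of_lt (Cardinal.mk_le_mk_of_subset (t := (fun w' => UUltAux.star (sf w' ∩ f w')) ''
          {w' : Set α | UUltAux.Small ((sf w ∩ f w) \ f w')}) ?_) hfin.lt_aleph0
      rintro V ⟨⟨w', rfl⟩, hsub⟩
      refine ⟨w', ?_, rfl⟩
      exact UUltAux.star_subset_star
        (hsub.trans (UUltAux.star_mono Set.inter_subset_right))
    have hmem : ℵ₀ ∈ {κ | ℵ₀ ≤ κ ∧ ∃ B : Set (Set (UUlt α)), IsLocalBase p B ∧ IsOpLike B κ} :=
      ⟨le_refl _, Bloc, hbase, hop⟩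
    exact le_antisymm (csInf_le' hmem) (le_csInf ⟨_, hmem⟩ fun b hb => hb.1)
  · -- character p = 2 ^ #α
    set B₀ : Set (Set (UUlt α)) := (fun y => UUltAux.star y) '' {y : Set α | y ∈ p.1} with hB₀
    have hlb : IsLocalBase p B₀ := by
      constructor
      · rintro U ⟨y, hy, rfl⟩
        exact ⟨UUltAux.isOpen_star _, hy⟩
      · intro W hW hpW
        obtain ⟨y, hy, hys⟩ := UUltAux.exists_star_subset hW p hpW
        exact ⟨UUltAux.star y, ⟨y, hy, rfl⟩, hys⟩
    have hcard : #B₀ ≤ 2 ^ #α := by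
      refine (Cardinal.mk_image_le).trans ?_
      refine (Cardinal.mk_subtype_le _).trans_eq ?_
      exact Cardinal.mk_set
    have hmem : (2 : Cardinal) ^ #α ∈
        {κ | ℵ₀ ≤ κ ∧ ∃ B : Set (Set (UUlt α)), IsLocalBase p B ∧ #B ≤ κ} :=
      ⟨(Cardinal.aleph0_le_mk α).trans (Cardinal.cantor _).le, B₀, hlb, hcard⟩
    refine le_antisymm (csInf_le' hmem) (le_csInf ⟨_, hmem⟩ ?_)
    rintro μ ⟨hμ0, B', hB', hB'card⟩
    have hch : ∀ w : Set α, ∃ U : Set (UUlt α), U ∈ B' ∧ U ⊆ UUltAux.star (f w) := by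
      intro w
      obtain ⟨U, hU, hUs⟩ := hB'.2 (UUltAux.star (f w)) (UUltAux.isOpen_star _) (hfp w)
      exact ⟨U, hU, hUs⟩
    choose h hmemB hsub using hch
    set h' : Set α → ↥B' := fun w => ⟨h w, hmemB w⟩ with hh'
    have key : ∀ U : ↥B', {w : Set α | h' w = U}.Finite := by
      intro U
      obtain ⟨y, hy, hys⟩ := UUltAux.exists_star_subset (hB'.1 U.1 U.2).1 p (hB'.1 U.1 U.2).2
      refine (hD y hy).subset ?_
      intro w hw
      have hUw : (U : Set (UUlt α)) = h w := by rw [← hw]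
      have : UUltAux.star y ⊆ UUltAux.star (f w) := by
        refine hys.trans ?_
        rw [hUw]; exact hsub w
      exact UUltAux.star_subset_star this
    have hineq : (2 : Cardinal) ^ #α ≤ #↥B' * ℵ₀ := by
      calc (2 : Cardinal) ^ #α = #(Set α) := Cardinal.mk_set.symm
        _ = #(Σ U : ↥B', {w : Set α // h' w = U}) :=
            (Cardinal.mk_congr (Equiv.sigmaFiberEquiv h')).symm
        _ = Cardinal.sum (fun U : ↥B' => #{w : Set α // h' w = U}) := Cardinal.mk_sigma _
        _ ≤ Cardinal.sum (fun _ : ↥B' => ℵ₀) :=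
            Cardinal.sum_le_sum _ _ (fun U => (key U).lt_aleph0.le)
        _ = #↥B' * ℵ₀ := Cardinal.sum_const' _ _
    calc (2 : Cardinal) ^ #α ≤ #↥B' * ℵ₀ := hineq
      _ ≤ μ * ℵ₀ := mul_le_mul' hB'card le_rfl
      _ = μ := Cardinal.mul_aleph0_eq hμ0
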